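/- arXiv:2506.06160 — 3 statements merged into one kernel-verified Lean document; each statement's English description precedes it below -/
import Mathlib

section
/- For every real κ ≥ 1, setting k* := ⌈log κ / log ρ⌉ + 1 (the ceiling of the base-ρ logarithm of κ, plus one), one has 2κ · r_{k*} ≤ 2/ρ < 1. -/
/-- The silver ratio `ρ = 1 + √2`. -/
noncomputable def silverRho : ℝ := 1 + Real.sqrt 2

/-- The silver rate `r_k = (1 + √(4 ρ^(2k) - 3))⁻¹`. -/
noncomputable def silverRate (k : ℕ) : ℝ :=
  (1 + Real.sqrt (4 * silverRho ^ (2 * k) - 3))⁻¹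

lemma silverRho_gt_two : (2:ℝ) < silverRho := by
  have h : (1:ℝ) < Real.sqrt 2 := by
    rw [show (1:ℝ) = Real.sqrt 1 by simp]
    exact Real.sqrt_lt_sqrt (by norm_num) (by norm_num)
  unfold silverRho; linarith

/-- Key quantitative step of Theorem 4.2: for `κ ≥ 1` and
`k* = ⌈log_ρ κ⌉ + 1`, one has `2 κ r_{k*} ≤ 2/ρ < 1`. -/
theorem silver_restart_contraction (κ : ℝ) (hκ : 1 ≤ κ) :
    2 * κ * silverRate ((⌈Real.log κ / Real.log silverRho⌉).toNat + 1) ≤ 2 / silverRho ∧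
      2 / silverRho < 1 := by
  have hρ2 := silverRho_gt_two
  have hρ0 : (0:ℝ) < silverRho := by linarith
  have hρ1 : (1:ℝ) < silverRho := by linarith
  have hlogρ : 0 < Real.log silverRho := Real.log_pos hρ1
  have hκ0 : (0:ℝ) < κ := by linarith
  set n : ℕ := (⌈Real.log κ / Real.log silverRho⌉).toNat with hn
  -- κ ≤ ρ^n
  have hκn : κ ≤ silverRho ^ n := by
    have h1 : Real.log κ / Real.log silverRho ≤ (n : ℝ) := by
      have h0 : (0:ℝ) ≤ Real.log κ / Real.log silverRho :=
        div_nonneg (Real.log_nonneg hκ) hlogρ.le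
      have hc : (0:ℤ) ≤ ⌈Real.log κ / Real.log silverRho⌉ :=
        Int.ceil_nonneg h0
      calc Real.log κ / Real.log silverRho
          ≤ (⌈Real.log κ / Real.log silverRho⌉ : ℝ) := Int.le_ceil _
        _ = (n : ℝ) := by rw [hn]; exact_mod_cast (Int.toNat_of_nonneg hc).symm
    have h2 : Real.log κ ≤ (n : ℝ) * Real.log silverRho :=
      (div_le_iff₀ hlogρ).mp h1
    have h3 : Real.log κ ≤ Real.log (silverRho ^ n) := by
      rwa [Real.log_pow]
    exact (Real.log_le_log_iff hκ0 (pow_pos hρ0 n)).mp h3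
  -- x := ρ^(n+1) ≥ 1
  set x : ℝ := silverRho ^ (n + 1) with hx
  have hx1 : (1:ℝ) ≤ x := one_le_pow₀ hρ1.le
  have hρκ : silverRho * κ ≤ x := by
    have := mul_le_mul_of_nonneg_left hκn hρ0.le
    calc silverRho * κ ≤ silverRho * silverRho ^ n := this
      _ = x := by rw [hx, pow_succ]; ring
  -- key: x ≤ 1 + √(4x²-3)
  have hsq : x - 1 ≤ Real.sqrt (4 * x ^ 2 - 3) := by
    have h1 : (x - 1) ^ 2 ≤ 4 * x ^ 2 - 3 := by nlinarith
    calc x - 1 = Real.sqrt ((x - 1) ^ 2) := by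
          rw [Real.sqrt_sq (by linarith)]
      _ ≤ Real.sqrt (4 * x ^ 2 - 3) := Real.sqrt_le_sqrt h1
  have hkey : silverRho * κ ≤ 1 + Real.sqrt (4 * x ^ 2 - 3) := by linarith
  constructor
  · unfold silverRate
    have hexp : silverRho ^ (2 * (n + 1)) = x ^ 2 := by
      rw [hx, ← pow_mul, mul_comm]
    rw [hexp]
    have hD : (0:ℝ) < 1 + Real.sqrt (4 * x ^ 2 - 3) := by
      have := Real.sqrt_nonneg (4 * x ^ 2 - 3); linarith
    rw [mul_inv_le_iff₀' hD, mul_div_assoc', le_div_iff₀ hρ0]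
    nlinarith
  · rw [div_lt_one hρ0]; linarith
end

section
/- Let f : ℝ^d → ℝ be differentiable, let x_0 ∈ ℝ^d, let x_* ∈ ℝ^d satisfy ∇f(x_*) = 0, and set x_1 := x_0 − (ρ − 1)·∇f(x_0). Then, with Q(u, v) := 2(f(u) − f(v)) − 2⟨∇f(v), u − v⟩ − ‖∇f(u) − ∇f(v)‖² and a_1 := (1 + √(4ρ² − 3))/2, the following identity holds: ρ·Q(x_0, x_1) + Q(x_1, x_0) + (ρ−1)·Q(x_1, x_*) + (ρ−1)·Q(x_*, x_0) + a_1·Q(x_*, x_1) = 2a_1(f(x_*) − f(x_1)) − [a_1²‖∇f(x_1)‖² + 2a_1⟨∇f(x_1), x_* − x_1⟩ + 2‖∇f(x_0)‖² + 2(ρ−1)⟨∇f(x_0), x_* − x_0⟩]. -/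
open scoped InnerProductSpace

/-- Euclidean base case of the silver step-size certificate (Lemma 5.3, `k = 1`): with
`x_1 = x_0 - (ρ - 1)∇f(x_0)`, `∇f(x_*) = 0`, the co-coercivity quantities
`Q(u,v) = 2(f(u) - f(v)) - 2⟨∇f(v), u - v⟩ - ‖∇f(u) - ∇f(v)‖²` and
`a_1 = (1 + √(4ρ² - 3))/2` satisfy an exact algebraic identity. -/
theorem silver_base_case_identity {d : ℕ}
    (f : EuclideanSpace ℝ (Fin d) → ℝ) (hdiff : Differentiable ℝ f)
    (x0 xstar : EuclideanSpace ℝ (Fin d)) (hstar : gradient f xstar = 0) :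
    let Q : EuclideanSpace ℝ (Fin d) → EuclideanSpace ℝ (Fin d) → ℝ := fun u v =>
      2 * (f u - f v) - 2 * ⟪gradient f v, u - v⟫_ℝ - ‖gradient f u - gradient f v‖ ^ 2
    let a1 : ℝ := (1 + Real.sqrt (4 * silverRho ^ 2 - 3)) / 2
    let x1 : EuclideanSpace ℝ (Fin d) := x0 - (silverRho - 1) • gradient f x0
    silverRho * Q x0 x1 + Q x1 x0 + (silverRho - 1) * Q x1 xstar
        + (silverRho - 1) * Q xstar x0 + a1 * Q xstar x1
      = 2 * a1 * (f xstar - f x1)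
        - (a1 ^ 2 * ‖gradient f x1‖ ^ 2 + 2 * a1 * ⟪gradient f x1, xstar - x1⟫_ℝ
          + 2 * ‖gradient f x0‖ ^ 2
          + 2 * (silverRho - 1) * ⟪gradient f x0, xstar - x0⟫_ℝ) := by
  intro Q a1 x1
  set ρ := silverRho with hρdef
  have h2 : Real.sqrt 2 ^ 2 = 2 := Real.sq_sqrt (by norm_num)
  have hρ : ρ ^ 2 = 2 * ρ + 1 := by
    simp only [hρdef, silverRho]; ring_nf; nlinarith [h2]
  have hρ1 : (1:ℝ) ≤ ρ := by
    simp only [hρdef, silverRho]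
    nlinarith [Real.sqrt_nonneg 2]
  have hs : Real.sqrt (4 * ρ ^ 2 - 3) ^ 2 = 4 * ρ ^ 2 - 3 :=
    Real.sq_sqrt (by nlinarith)
  have ha1 : a1 ^ 2 = a1 + 2 * ρ := by
    simp only [a1]
    nlinarith [hs, hρ]
  set g0 := gradient f x0 with hg0
  set g1 := gradient f x1 with hg1
  have hx01 : x0 - x1 = (ρ - 1) • g0 := by
    simp only [x1]; abel
  have hx10 : x1 - x0 = -((ρ - 1) • g0) := by
    simp only [x1]; abel
  simp only [Q, hstar, inner_zero_left, norm_zero, sub_zero, zero_sub, norm_neg,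
    hx01, hx10, inner_neg_right, real_inner_smul_right, ← hg0, ← hg1]
  have hn0 : ‖g0 - g1‖ ^ 2 = ‖g0‖ ^ 2 - 2 * ⟪g0, g1⟫_ℝ + ‖g1‖ ^ 2 := by
    rw [← real_inner_self_eq_norm_sq, ← real_inner_self_eq_norm_sq,
      ← real_inner_self_eq_norm_sq, inner_sub_sub_self, real_inner_comm g1 g0]
    ring
  have hn1 : ‖g1 - g0‖ ^ 2 = ‖g0 - g1‖ ^ 2 := by rw [← norm_neg]; congr 1; abel
  have hsym : ⟪g1, g0⟫_ℝ = ⟪g0, g1⟫_ℝ := real_inner_comm _ _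
  rw [hn1, hn0, hsym, real_inner_self_eq_norm_sq g0]
  linear_combination (-2 * ⟪g0, g1⟫_ℝ) * hρ + ‖g1‖ ^ 2 * ha1
end

section
/- Let P and Q be real symmetric positive definite d×d matrices. Then for every t ∈ [0, 1] the matrix (1 − t)·I + t·(PQ) has positive determinant, and the function t ↦ −log det((1 − t)·I + t·(PQ)) is convex on the interval [0, 1]. -/
open Matrix Set

lemma posDef_conj_aux {n : Type*} [Fintype n] [DecidableEq n]
    {A B : Matrix n n ℝ} (hA : A.PosDef) (hB : IsUnit B.det) :
    (Bᴴ * A * B).PosDef := by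
  refine PosDef.of_dotProduct_mulVec_pos (isHermitian_conjTranspose_mul_mul B hA.1) fun x hx => ?_
  have hBx : B *ᵥ x ≠ 0 := by
    intro h
    apply hx
    have := congrArg (fun v => B⁻¹ *ᵥ v) h
    simpa [Matrix.mulVec_mulVec, Matrix.nonsing_inv_mul B hB] using this
  simpa only [star_mulVec, dotProduct_mulVec, vecMul_vecMul] using hA.dotProduct_mulVec_pos hBx

lemma convexOn_sum_aux {ι : Type*} (s : Finset ι) {S : Set ℝ} (hS : Convex ℝ S)
    (f : ι → ℝ → ℝ) (hf : ∀ i ∈ s, ConvexOn ℝ S (f i)) :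
    ConvexOn ℝ S (fun t => ∑ i ∈ s, f i t) := by
  classical
  induction s using Finset.induction with
  | empty => simpa using convexOn_const 0 hS
  | @insert a s' hne ih =>
    simp only [Finset.sum_insert hne]
    exact (hf a (Finset.mem_insert_self a s')).add
      (ih fun i hi => hf i (Finset.mem_insert_of_mem hi))

/-- `t ↦ -log (a + t * (b - a))` is convex on `[0,1]` when `a, b > 0`. -/
lemma convexOn_neg_log_affine {a b : ℝ} (ha : 0 < a) (hb : 0 < b) :
    ConvexOn ℝ (Set.Icc (0 : ℝ) 1) (fun t => -Real.log ((1 - t) * a + t * b)) := by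
  have hlog : ConvexOn ℝ (Set.Ioi (0 : ℝ)) (fun x => -Real.log x) :=
    strictConcaveOn_log_Ioi.concaveOn.neg
  have hcomp := hlog.comp_affineMap (AffineMap.lineMap (a : ℝ) (b : ℝ))
  have hsub : Set.Icc (0 : ℝ) 1 ⊆ (AffineMap.lineMap (a : ℝ) (b : ℝ)) ⁻¹' (Set.Ioi 0) := by
    intro t ht
    simp only [Set.mem_preimage, AffineMap.lineMap_apply_module', Set.mem_Ioi, smul_eq_mul]
    rcases eq_or_lt_of_le ht.2 with h | h
    · subst h; simpa using hb
    · nlinarith [mul_nonneg ht.1 hb.le, mul_pos (sub_pos.mpr h) ha]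
  have := (hcomp.subset hsub (convex_Icc 0 1)).congr (g := fun t => -Real.log ((1 - t) * a + t * b))
  apply this
  intro t _
  simp only [Function.comp_apply, AffineMap.lineMap_apply_module', smul_eq_mul]
  ring_nf

section SqrtAux
open scoped MatrixOrder

lemma exists_sqrt_aux {d : ℕ} {P : Matrix (Fin d) (Fin d) ℝ} (hP : P.PosDef) :
    ∃ S : Matrix (Fin d) (Fin d) ℝ, S * S = P ∧ S.IsHermitian :=
  ⟨CFC.sqrt P, CFC.sqrt_mul_sqrt_self P (nonneg_iff_posSemidef.mpr hP.posSemidef),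
    (nonneg_iff_posSemidef.mp (CFC.sqrt_nonneg P)).1⟩

end SqrtAux

/-- Example D.8 (Bures–Wasserstein case), core analytic claim: for real symmetric positive
definite matrices `P, Q`, the matrix `(1-t)·I + t·(PQ)` has positive determinant for every
`t ∈ [0,1]`, and `t ↦ -log det((1-t)·I + t·(PQ))` is convex on `[0,1]`. -/
theorem neg_log_det_convex_along_generalized_geodesic {d : ℕ}
    (P Q : Matrix (Fin d) (Fin d) ℝ) (hP : P.PosDef) (hQ : Q.PosDef) :
    (∀ t ∈ Set.Icc (0 : ℝ) 1,
      0 < ((1 - t) • (1 : Matrix (Fin d) (Fin d) ℝ) + t • (P * Q)).det) ∧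
    ConvexOn ℝ (Set.Icc (0 : ℝ) 1)
      (fun t => -Real.log ((1 - t) • (1 : Matrix (Fin d) (Fin d) ℝ) + t • (P * Q)).det) := by
  classical
  obtain ⟨S, hSS, hSH⟩ := exists_sqrt_aux hP
  have hdetS : S.det ≠ 0 := by
    intro h
    have : P.det = 0 := by rw [← hSS, det_mul, h, mul_zero]
    exact (ne_of_gt hP.det_pos) this
  have hSunit : IsUnit S.det := isUnit_iff_ne_zero.mpr hdetS
  have hSinv : S * S⁻¹ = 1 := mul_nonsing_inv S hSunit
  set M := S * Q * S with hMdef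
  have hM : M.PosDef := by
    have := posDef_conj_aux hQ hSunit
    rwa [hSH.eq] at this
  set μ := hM.isHermitian.eigenvalues with hμdef
  have hμpos : ∀ i, 0 < μ i := fun i => hM.eigenvalues_pos i
  -- determinant identity
  have key : ∀ t : ℝ, ((1 - t) • (1 : Matrix (Fin d) (Fin d) ℝ) + t • (P * Q)).det
      = ∏ i, ((1 - t) + t * μ i) := by
    intro t
    have hstep1 : (1 - t) • (1 : Matrix (Fin d) (Fin d) ℝ) + t • (P * Q)
        = S * ((1 - t) • 1 + t • M) * S⁻¹ := by
      rw [hMdef]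
      rw [Matrix.mul_add, Matrix.add_mul]
      congr 1
      · rw [mul_smul_comm, smul_mul_assoc, Matrix.mul_one, hSinv]
      · rw [mul_smul_comm, smul_mul_assoc]
        congr 1
        symm
        calc S * (S * Q * S) * S⁻¹ = (S * S) * Q * (S * S⁻¹) := by
              simp only [Matrix.mul_assoc]
          _ = P * Q := by rw [hSS, hSinv, Matrix.mul_one]
    have hunit : Matrix.IsHermitian.eigenvectorUnitary hM.isHermitian *
        star (Matrix.IsHermitian.eigenvectorUnitary hM.isHermitian
          : Matrix (Fin d) (Fin d) ℝ) = 1 :=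
      (Matrix.mem_unitaryGroup_iff).mp (Matrix.IsHermitian.eigenvectorUnitary hM.isHermitian).2
    set U := (Matrix.IsHermitian.eigenvectorUnitary hM.isHermitian
      : Matrix (Fin d) (Fin d) ℝ) with hUdef
    have hspec : M = U * Matrix.diagonal (RCLike.ofReal ∘ μ) * star U :=
      hM.isHermitian.spectral_theorem
    have hstep2 : (1 - t) • (1 : Matrix (Fin d) (Fin d) ℝ) + t • M
        = U * ((1 - t) • 1 + t • Matrix.diagonal (RCLike.ofReal ∘ μ)) * star U := by
      rw [Matrix.mul_add, Matrix.add_mul]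
      congr 1
      · rw [mul_smul_comm, smul_mul_assoc, Matrix.mul_one, hunit]
      · rw [mul_smul_comm, smul_mul_assoc, ← hspec]
    have hdiag : (1 - t) • (1 : Matrix (Fin d) (Fin d) ℝ)
        + t • Matrix.diagonal (RCLike.ofReal ∘ μ)
        = Matrix.diagonal (fun i => (1 - t) + t * μ i) := by
      ext i j
      by_cases h : i = j
      · subst h
        simp [Matrix.one_apply, Matrix.diagonal_apply, RCLike.ofReal]
      · simp [Matrix.one_apply, Matrix.diagonal_apply, h]
    have hdetU : U.det * (star U).det = 1 := by
      rw [← Matrix.det_mul, hunit, Matrix.det_one]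
    rw [hstep1, Matrix.det_mul, Matrix.det_mul, hstep2, Matrix.det_mul, Matrix.det_mul,
      hdiag, Matrix.det_diagonal, Matrix.det_nonsing_inv]
    have hre : S.det * (U.det * (∏ i, ((1 - t) + t * μ i)) * (star U).det) * (Ring.inverse S.det)
        = (∏ i, ((1 - t) + t * μ i)) * (U.det * (star U).det)
          * (S.det * (Ring.inverse S.det)) := by ring
    rw [hre, hdetU, Ring.mul_inverse_cancel _ hSunit, mul_one, mul_one]
  have hfac : ∀ t ∈ Set.Icc (0 : ℝ) 1, ∀ i, 0 < (1 - t) + t * μ i := by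
    intro t ht i
    rcases eq_or_lt_of_le ht.2 with h | h
    · subst h; simpa using hμpos i
    · nlinarith [mul_nonneg ht.1 (hμpos i).le, mul_pos (sub_pos.mpr h) one_pos]
  constructor
  · intro t ht
    rw [key t]
    exact Finset.prod_pos fun i _ => hfac t ht i
  · have hconv : ConvexOn ℝ (Set.Icc (0 : ℝ) 1)
        (fun t => ∑ i, -Real.log ((1 - t) * 1 + t * μ i)) :=
      convexOn_sum_aux _ (convex_Icc 0 1) _
        (fun i _ => convexOn_neg_log_affine one_pos (hμpos i))
    apply hconv.congr
    intro t ht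
    simp only
    rw [key t, Real.log_prod (fun i _ => (hfac t ht i).ne'), ← Finset.sum_neg_distrib]
    refine Finset.sum_congr rfl fun i _ => ?_
    rw [mul_one]
end
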